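/- Let F = f0 − (1/3)·q² ∈ ℂ[x0,x1,x2,x3]. A nonzero vector x ∈ ℂ⁴ satisfies ∇F(x) = 0 (all four partial derivatives vanish) if and only if x is a complex scalar multiple of a vector obtained from (1,1,1,0) by permuting the coordinates and changing signs of coordinates. Consequently the quartic surface {F = 0} ⊂ ℙ³(ℂ) has exactly 16 singular points, namely the points (±1 : ±1 : ±1 : 0) and their coordinate permutations; it is a Kummer surface with the maximal number 16 of nodes for a quartic. -/

import Mathlib

open MvPolynomial

noncomputable def q : MvPolynomial (Fin 4) ℂ := X 0 ^ 2 + X 1 ^ 2 + X 2 ^ 2 + X 3 ^ 2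
noncomputable def f0 : MvPolynomial (Fin 4) ℂ := X 0 ^ 4 + X 1 ^ 4 + X 2 ^ 4 + X 3 ^ 4

noncomputable def F : MvPolynomial (Fin 4) ℂ := f0 - C (1/3 : ℂ) * q ^ 2

lemma fin4cases : ∀ m : Fin 4, m = 0 ∨ m = 1 ∨ m = 2 ∨ m = 3 := by decide

lemma evalA (x : Fin 4 → ℂ) (i : Fin 4) :
    eval x (pderiv i F) = (4/3) * x i * (3 * x i ^ 2 - (x 0 ^ 2 + x 1 ^ 2 + x 2 ^ 2 + x 3 ^ 2)) := by
  fin_cases i <;>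
  · simp [F, f0, q, pderiv_X, Pi.single_apply]
    ring

lemma grad_iff (x : Fin 4 → ℂ) :
    (∀ i, eval x (pderiv i F) = 0) ↔
    ∀ i, x i = 0 ∨ 3 * x i ^ 2 = x 0 ^ 2 + x 1 ^ 2 + x 2 ^ 2 + x 3 ^ 2 := by
  simp only [evalA, mul_eq_zero, sub_eq_zero]
  norm_num

lemma sq_eq' {a b : ℂ} (h : a ^ 2 = b ^ 2) : a = b ∨ a = -b := by
  have h2 : (a - b) * (a + b) = 0 := by linear_combination h
  rcases mul_eq_zero.mp h2 with h' | h'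
  · exact Or.inl (sub_eq_zero.mp h')
  · exact Or.inr (eq_neg_of_add_eq_zero_left h')

lemma grad_of_form (c : ℂ) (σ : Equiv.Perm (Fin 4)) (ε : Fin 4 → ℂ)
    (hε : ∀ i, ε i = 1 ∨ ε i = -1) :
    ∀ i, eval (fun i => c * ε i * (![1,1,1,0] : Fin 4 → ℂ) (σ i)) (pderiv i F) = 0 := by
  set v : Fin 4 → ℂ := ![1,1,1,0] with hv
  set x : Fin 4 → ℂ := fun i => c * ε i * v (σ i) with hx
  rw [grad_iff]
  have hs : x 0 ^ 2 + x 1 ^ 2 + x 2 ^ 2 + x 3 ^ 2 = 3 * c ^ 2 := by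
    have h1 : x 0 ^ 2 + x 1 ^ 2 + x 2 ^ 2 + x 3 ^ 2 = ∑ i : Fin 4, x i ^ 2 := by
      rw [Fin.sum_univ_four]
    rw [h1]
    have h2 : ∀ i : Fin 4, x i ^ 2 = c ^ 2 * v (σ i) ^ 2 := by
      intro i; rcases hε i with h | h <;> rw [hx] <;> simp only [h] <;> ring
    rw [Finset.sum_congr rfl fun i _ => h2 i, ← Finset.mul_sum,
      Equiv.sum_comp σ (fun j => v j ^ 2), Fin.sum_univ_four]
    have e2 : (![1,1,1,0] : Fin 4 → ℂ) 2 = 1 := rfl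
    have e3 : (![1,1,1,0] : Fin 4 → ℂ) 3 = 0 := rfl
    norm_num [hv]; rw [e2, e3]; ring
  intro i
  rcases eq_or_ne (σ i) 3 with h3 | h3
  · left; rw [hx]; simp [h3, hv]
  · right
    rw [hs]
    have hv1 : v (σ i) = 1 := by
      rcases fin4cases (σ i) with h | h | h | h <;> first
        | exact absurd h h3
        | (rw [h]; simp [hv])
    have : x i = c * ε i := by show c * ε i * v (σ i) = c * ε i; rw [hv1]; ring
    rw [this]
    rcases hε i with h | h <;> rw [h] <;> ring

lemma part1fwd (x : Fin 4 → ℂ) (hx : x ≠ 0)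
    (h : ∀ i, x i = 0 ∨ 3 * x i ^ 2 = x 0 ^ 2 + x 1 ^ 2 + x 2 ^ 2 + x 3 ^ 2) :
    ∃ (c : ℂ) (σ : Equiv.Perm (Fin 4)) (ε : Fin 4 → ℂ),
      (∀ i, ε i = 1 ∨ ε i = -1) ∧
      x = fun i => c * ε i * (![1, 1, 1, 0] : Fin 4 → ℂ) (σ i) := by
  have e : ∀ i, x i ≠ 0 → 3 * x i ^ 2 = x 0 ^ 2 + x 1 ^ 2 + x 2 ^ 2 + x 3 ^ 2 :=
    fun i hi => (h i).resolve_left hi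
  have hz : ∀ (a : ℂ), a ^ 2 = 0 → a = 0 := fun a ha =>
    (pow_eq_zero_iff two_ne_zero).mp ha
  by_cases h0 : x 0 = 0 <;> by_cases h1 : x 1 = 0 <;>
    by_cases h2 : x 2 = 0 <;> by_cases h3 : x 3 = 0
  · exact absurd (_root_.funext fun i => by fin_cases i <;> simpa) hx
  · have hS : x 0 ^ 2 + x 1 ^ 2 + x 2 ^ 2 + x 3 ^ 2 = 0 := by
      linear_combination (e 3 h3 + 3 * x 0 * h0 + 3 * x 1 * h1 + 3 * x 2 * h2) / 2
    exact absurd (hz _ (by linear_combination (e 3 h3 + hS) / 3)) h3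
  · have hS : x 0 ^ 2 + x 1 ^ 2 + x 2 ^ 2 + x 3 ^ 2 = 0 := by
      linear_combination (e 2 h2 + 3 * x 0 * h0 + 3 * x 1 * h1 + 3 * x 3 * h3) / 2
    exact absurd (hz _ (by linear_combination (e 2 h2 + hS) / 3)) h2
  · have hS : x 0 ^ 2 + x 1 ^ 2 + x 2 ^ 2 + x 3 ^ 2 = 0 := by
      linear_combination e 2 h2 + e 3 h3 + 3 * x 0 * h0 + 3 * x 1 * h1
    exact absurd (hz _ (by linear_combination (e 2 h2 + hS) / 3)) h2
  · have hS : x 0 ^ 2 + x 1 ^ 2 + x 2 ^ 2 + x 3 ^ 2 = 0 := by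
      linear_combination (e 1 h1 + 3 * x 0 * h0 + 3 * x 2 * h2 + 3 * x 3 * h3) / 2
    exact absurd (hz _ (by linear_combination (e 1 h1 + hS) / 3)) h1
  · have hS : x 0 ^ 2 + x 1 ^ 2 + x 2 ^ 2 + x 3 ^ 2 = 0 := by
      linear_combination e 1 h1 + e 3 h3 + 3 * x 0 * h0 + 3 * x 2 * h2
    exact absurd (hz _ (by linear_combination (e 1 h1 + hS) / 3)) h1
  · have hS : x 0 ^ 2 + x 1 ^ 2 + x 2 ^ 2 + x 3 ^ 2 = 0 := by
      linear_combination e 1 h1 + e 2 h2 + 3 * x 0 * h0 + 3 * x 3 * h3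
    exact absurd (hz _ (by linear_combination (e 1 h1 + hS) / 3)) h1
  · have e1 := e 1 h1; have e2 := e 2 h2; have e3 := e 3 h3
    have d2 : x 2 / x 1 = 1 ∨ x 2 / x 1 = -1 := by
      rcases sq_eq' (show x 2 ^ 2 = x 1 ^ 2 by linear_combination (e2 - e1) / 3) with hq | hq <;>
        rw [hq] <;> [left; right] <;> field_simp
    have d3 : x 3 / x 1 = 1 ∨ x 3 / x 1 = -1 := by
      rcases sq_eq' (show x 3 ^ 2 = x 1 ^ 2 by linear_combination (e3 - e1) / 3) with hq | hq <;>
        rw [hq] <;> [left; right] <;> field_simp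
    refine ⟨x 1, Equiv.swap 0 3, ![1, 1, x 2 / x 1, x 3 / x 1], ?_, ?_⟩
    · intro i; fin_cases i <;> simp <;> tauto
    · funext i; fin_cases i <;>
        simp [Equiv.swap_apply_def, h0] <;> field_simp
  · have hS : x 0 ^ 2 + x 1 ^ 2 + x 2 ^ 2 + x 3 ^ 2 = 0 := by
      linear_combination (e 0 h0 + 3 * x 1 * h1 + 3 * x 2 * h2 + 3 * x 3 * h3) / 2
    exact absurd (hz _ (by linear_combination (e 0 h0 + hS) / 3)) h0
  · have hS : x 0 ^ 2 + x 1 ^ 2 + x 2 ^ 2 + x 3 ^ 2 = 0 := by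
      linear_combination e 0 h0 + e 3 h3 + 3 * x 1 * h1 + 3 * x 2 * h2
    exact absurd (hz _ (by linear_combination (e 0 h0 + hS) / 3)) h0
  · have hS : x 0 ^ 2 + x 1 ^ 2 + x 2 ^ 2 + x 3 ^ 2 = 0 := by
      linear_combination e 0 h0 + e 2 h2 + 3 * x 1 * h1 + 3 * x 3 * h3
    exact absurd (hz _ (by linear_combination (e 0 h0 + hS) / 3)) h0
  · have e0 := e 0 h0; have e2 := e 2 h2; have e3 := e 3 h3
    have d2 : x 2 / x 0 = 1 ∨ x 2 / x 0 = -1 := by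
      rcases sq_eq' (show x 2 ^ 2 = x 0 ^ 2 by linear_combination (e2 - e0) / 3) with hq | hq <;>
        rw [hq] <;> [left; right] <;> field_simp
    have d3 : x 3 / x 0 = 1 ∨ x 3 / x 0 = -1 := by
      rcases sq_eq' (show x 3 ^ 2 = x 0 ^ 2 by linear_combination (e3 - e0) / 3) with hq | hq <;>
        rw [hq] <;> [left; right] <;> field_simp
    refine ⟨x 0, Equiv.swap 1 3, ![1, 1, x 2 / x 0, x 3 / x 0], ?_, ?_⟩
    · intro i; fin_cases i <;> simp <;> tauto
    · funext i; fin_cases i <;>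
        simp [Equiv.swap_apply_def, h1] <;> field_simp
  · have hS : x 0 ^ 2 + x 1 ^ 2 + x 2 ^ 2 + x 3 ^ 2 = 0 := by
      linear_combination e 0 h0 + e 1 h1 + 3 * x 2 * h2 + 3 * x 3 * h3
    exact absurd (hz _ (by linear_combination (e 0 h0 + hS) / 3)) h0
  · have e0 := e 0 h0; have e1 := e 1 h1; have e3 := e 3 h3
    have d1 : x 1 / x 0 = 1 ∨ x 1 / x 0 = -1 := by
      rcases sq_eq' (show x 1 ^ 2 = x 0 ^ 2 by linear_combination (e1 - e0) / 3) with hq | hq <;>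
        rw [hq] <;> [left; right] <;> field_simp
    have d3 : x 3 / x 0 = 1 ∨ x 3 / x 0 = -1 := by
      rcases sq_eq' (show x 3 ^ 2 = x 0 ^ 2 by linear_combination (e3 - e0) / 3) with hq | hq <;>
        rw [hq] <;> [left; right] <;> field_simp
    refine ⟨x 0, Equiv.swap 2 3, ![1, x 1 / x 0, 1, x 3 / x 0], ?_, ?_⟩
    · intro i; fin_cases i <;> simp <;> tauto
    · funext i; fin_cases i <;>
        simp [Equiv.swap_apply_def, h2] <;> field_simp
  · have e0 := e 0 h0; have e1 := e 1 h1; have e2 := e 2 h2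
    have d1 : x 1 / x 0 = 1 ∨ x 1 / x 0 = -1 := by
      rcases sq_eq' (show x 1 ^ 2 = x 0 ^ 2 by linear_combination (e1 - e0) / 3) with hq | hq <;>
        rw [hq] <;> [left; right] <;> field_simp
    have d2 : x 2 / x 0 = 1 ∨ x 2 / x 0 = -1 := by
      rcases sq_eq' (show x 2 ^ 2 = x 0 ^ 2 by linear_combination (e2 - e0) / 3) with hq | hq <;>
        rw [hq] <;> [left; right] <;> field_simp
    refine ⟨x 0, 1, ![1, x 1 / x 0, x 2 / x 0, 1], ?_, ?_⟩
    · intro i; fin_cases i <;> simp <;> tauto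
    · funext i; fin_cases i <;> simp [h3] <;> field_simp
  · have hS : x 0 ^ 2 + x 1 ^ 2 + x 2 ^ 2 + x 3 ^ 2 = 0 := by
      linear_combination -(e 0 h0 + e 1 h1 + e 2 h2 + e 3 h3)
    exact absurd (hz _ (by linear_combination (e 0 h0 + hS) / 3)) h0

noncomputable def sg (b : Bool) : ℂ := if b then 1 else -1

lemma sg_cases (b : Bool) : sg b = 1 ∨ sg b = -1 := by cases b <;> simp [sg]
lemma sg_ne (b : Bool) : sg b ≠ 0 := by cases b <;> simp [sg]
lemma sg_inj {a b : Bool} (h : sg a = sg b) : a = b := by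
  cases a <;> cases b <;> simp [sg] at h ⊢ <;> norm_num at h

noncomputable def vec (t : Fin 4 × Bool × Bool) : Fin 4 → ℂ :=
  ![![0, 1, sg t.2.1, sg t.2.2],
    ![1, 0, sg t.2.1, sg t.2.2],
    ![1, sg t.2.1, 0, sg t.2.2],
    ![1, sg t.2.1, sg t.2.2, 0]] t.1

lemma vec_ne (t : Fin 4 × Bool × Bool) : vec t ≠ 0 := by
  obtain ⟨k, a, b⟩ := t
  rcases fin4cases k with rfl | rfl | rfl | rfl
  · intro h; have : (1 : ℂ) = 0 := congrFun h 1; norm_num at this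
  · intro h; have : (1 : ℂ) = 0 := congrFun h 0; norm_num at this
  · intro h; have : (1 : ℂ) = 0 := congrFun h 0; norm_num at this
  · intro h; have : (1 : ℂ) = 0 := congrFun h 0; norm_num at this

lemma no1 {u : ℂˣ} (h : (u : ℂ) * 1 = 0) : False :=
  u.ne_zero (by rwa [mul_one] at h)

lemma nos {u : ℂˣ} {c : Bool} (h : (u : ℂ) * sg c = 0) : False := by
  rcases mul_eq_zero.mp h with hc | hc
  · exact u.ne_zero hc
  · exact sg_ne _ hc

lemma uone {u : ℂˣ} (h1 : (u : ℂ) * 1 = 1) : (u : ℂ) = 1 := by simpa using h1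

lemma diagb {u : ℂˣ} (h1 : (u : ℂ) * 1 = 1) {a b : Bool}
    (h : (u : ℂ) * sg a = sg b) : a = b := by
  apply sg_inj
  rw [← h, uone h1, one_mul]

lemma vec_inj : Function.Injective (fun t => Projectivization.mk ℂ (vec t) (vec_ne t)) := by
  intro t t' h
  rw [Projectivization.mk_eq_mk_iff] at h
  obtain ⟨u, hu⟩ := h
  obtain ⟨k, a, b⟩ := t; obtain ⟨k', a', b'⟩ := t'
  rcases fin4cases k with rfl | rfl | rfl | rfl <;>
    rcases fin4cases k' with rfl | rfl | rfl | rfl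
  · have h1 : (u : ℂ) * 1 = 1 := congrFun hu 1
    have h2 : (u : ℂ) * sg a' = sg a := congrFun hu 2
    have h3 : (u : ℂ) * sg b' = sg b := congrFun hu 3
    rw [diagb h1 h2, diagb h1 h3]
  · exact absurd (congrFun hu 0 : (u : ℂ) * 1 = 0) (fun hh => no1 hh)
  · exact absurd (congrFun hu 0 : (u : ℂ) * 1 = 0) (fun hh => no1 hh)
  · exact absurd (congrFun hu 0 : (u : ℂ) * 1 = 0) (fun hh => no1 hh)
  · exact absurd (congrFun hu 1 : (u : ℂ) * 1 = 0) (fun hh => no1 hh)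
  · have h1 : (u : ℂ) * 1 = 1 := congrFun hu 0
    have h2 : (u : ℂ) * sg a' = sg a := congrFun hu 2
    have h3 : (u : ℂ) * sg b' = sg b := congrFun hu 3
    rw [diagb h1 h2, diagb h1 h3]
  · exact absurd (congrFun hu 1 : (u : ℂ) * sg a' = 0) (fun hh => nos hh)
  · exact absurd (congrFun hu 1 : (u : ℂ) * sg a' = 0) (fun hh => nos hh)
  · exact absurd (congrFun hu 2 : (u : ℂ) * sg a' = 0) (fun hh => nos hh)
  · exact absurd (congrFun hu 2 : (u : ℂ) * sg a' = 0) (fun hh => nos hh)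
  · have h1 : (u : ℂ) * 1 = 1 := congrFun hu 0
    have h2 : (u : ℂ) * sg a' = sg a := congrFun hu 1
    have h3 : (u : ℂ) * sg b' = sg b := congrFun hu 3
    rw [diagb h1 h2, diagb h1 h3]
  · exact absurd (congrFun hu 2 : (u : ℂ) * sg b' = 0) (fun hh => nos hh)
  · exact absurd (congrFun hu 3 : (u : ℂ) * sg b' = 0) (fun hh => nos hh)
  · exact absurd (congrFun hu 3 : (u : ℂ) * sg b' = 0) (fun hh => nos hh)
  · exact absurd (congrFun hu 3 : (u : ℂ) * sg b' = 0) (fun hh => nos hh)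
  · have h1 : (u : ℂ) * 1 = 1 := congrFun hu 0
    have h2 : (u : ℂ) * sg a' = sg a := congrFun hu 1
    have h3 : (u : ℂ) * sg b' = sg b := congrFun hu 2
    rw [diagb h1 h2, diagb h1 h3]

lemma exists_sg {z w : ℂ} (hz : z = 1 ∨ z = -1) (hw : w = 1 ∨ w = -1) :
    ∃ b : Bool, sg b = z * w := by
  rcases hz with rfl | rfl <;> rcases hw with rfl | rfl
  exacts [⟨true, by norm_num [sg]⟩, ⟨false, by norm_num [sg]⟩,
    ⟨false, by norm_num [sg]⟩, ⟨true, by norm_num [sg]⟩]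

lemma sq1 {z : ℂ} (hz : z = 1 ∨ z = -1) : z * z = 1 := by
  rcases hz with rfl | rfl <;> norm_num

lemma ne1 {z : ℂ} (hz : z = 1 ∨ z = -1) : z ≠ 0 := by
  rcases hz with rfl | rfl <;> norm_num

lemma vec_form (t : Fin 4 × Bool × Bool) :
    ∃ (c : ℂ) (σ : Equiv.Perm (Fin 4)) (ε : Fin 4 → ℂ),
      (∀ i, ε i = 1 ∨ ε i = -1) ∧
      vec t = fun i => c * ε i * (![1,1,1,0] : Fin 4 → ℂ) (σ i) := by
  obtain ⟨k, a, b⟩ := t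
  rcases fin4cases k with rfl | rfl | rfl | rfl
  · refine ⟨1, Equiv.swap 0 3, ![1, 1, sg a, sg b], ?_, ?_⟩
    · intro i; rcases fin4cases i with rfl | rfl | rfl | rfl
      exacts [Or.inl rfl, Or.inl rfl, sg_cases a, sg_cases b]
    · funext i; rcases fin4cases i with rfl | rfl | rfl | rfl
      · show (0:ℂ) = 1 * 1 * 0; norm_num
      · show (1:ℂ) = 1 * 1 * 1; norm_num
      · show sg a = 1 * sg a * 1; ring
      · show sg b = 1 * sg b * 1; ring
  · refine ⟨1, Equiv.swap 1 3, ![1, 1, sg a, sg b], ?_, ?_⟩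
    · intro i; rcases fin4cases i with rfl | rfl | rfl | rfl
      exacts [Or.inl rfl, Or.inl rfl, sg_cases a, sg_cases b]
    · funext i; rcases fin4cases i with rfl | rfl | rfl | rfl
      · show (1:ℂ) = 1 * 1 * 1; norm_num
      · show (0:ℂ) = 1 * 1 * 0; norm_num
      · show sg a = 1 * sg a * 1; ring
      · show sg b = 1 * sg b * 1; ring
  · refine ⟨1, Equiv.swap 2 3, ![1, sg a, 1, sg b], ?_, ?_⟩
    · intro i; rcases fin4cases i with rfl | rfl | rfl | rfl
      exacts [Or.inl rfl, sg_cases a, Or.inl rfl, sg_cases b]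
    · funext i; rcases fin4cases i with rfl | rfl | rfl | rfl
      · show (1:ℂ) = 1 * 1 * 1; norm_num
      · show sg a = 1 * sg a * 1; ring
      · show (0:ℂ) = 1 * 1 * 0; norm_num
      · show sg b = 1 * sg b * 1; ring
  · refine ⟨1, 1, ![1, sg a, sg b, 1], ?_, ?_⟩
    · intro i; rcases fin4cases i with rfl | rfl | rfl | rfl
      exacts [Or.inl rfl, sg_cases a, sg_cases b, Or.inl rfl]
    · funext i; rcases fin4cases i with rfl | rfl | rfl | rfl
      · show (1:ℂ) = 1 * 1 * 1; norm_num
      · show sg a = 1 * sg a * 1; ring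
      · show sg b = 1 * sg b * 1; ring
      · show (0:ℂ) = 1 * 1 * 0; norm_num

lemma mem_grad (t : Fin 4 × Bool × Bool) :
    ∀ i, eval ((Projectivization.mk ℂ (vec t) (vec_ne t)).rep) (pderiv i F) = 0 := by
  set p := Projectivization.mk ℂ (vec t) (vec_ne t) with hp
  have hmk : Projectivization.mk ℂ p.rep p.rep_nonzero = Projectivization.mk ℂ (vec t) (vec_ne t) := by
    rw [Projectivization.mk_rep]
  obtain ⟨u, hu⟩ := (Projectivization.mk_eq_mk_iff ℂ _ _ _ _).mp hmk
  obtain ⟨c, σ, ε, hε, hform⟩ := vec_form t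
  have hrep : p.rep = fun i => ((u : ℂ) * c) * ε i * (![1,1,1,0] : Fin 4 → ℂ) (σ i) := by
    funext i
    rw [← hu]
    show (u : ℂ) * vec t i = _
    rw [hform]
    show (u : ℂ) * (c * ε i * _) = _
    ring
  intro i; rw [hrep]; exact grad_of_form _ σ ε hε i

lemma hset : {p : Projectivization ℂ (Fin 4 → ℂ) | ∀ i : Fin 4, eval p.rep (pderiv i F) = 0}
    = Set.range (fun t => Projectivization.mk ℂ (vec t) (vec_ne t)) := by
  ext p
  simp only [Set.mem_setOf_eq, Set.mem_range]
  constructor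
  · intro hp
    obtain ⟨c, σ, ε, hε, hx⟩ := part1fwd p.rep p.rep_nonzero ((grad_iff p.rep).mp hp)
    have hc : c ≠ 0 := by
      intro hc0
      apply p.rep_nonzero
      rw [hx, hc0]; funext i; simp
    have hne3 : ∀ j : Fin 4, j ≠ 3 → (![1,1,1,0] : Fin 4 → ℂ) j = 1 := by
      intro j hj
      rcases fin4cases j with rfl | rfl | rfl | rfl
      · rfl
      · rfl
      · rfl
      · exact absurd rfl hj
    have hkrep : ∀ i : Fin 4, i ≠ σ.symm 3 → p.rep i = c * ε i := by
      intro i hi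
      have hσ : σ i ≠ 3 := fun hh => hi (by rw [← hh, Equiv.symm_apply_apply])
      rw [hx]; show c * ε i * _ = _; rw [hne3 _ hσ]; ring
    have hk0 : p.rep (σ.symm 3) = 0 := by
      rw [hx]
      show c * ε _ * (![1,1,1,0] : Fin 4 → ℂ) (σ (σ.symm 3)) = 0
      rw [Equiv.apply_symm_apply]
      show c * _ * 0 = 0; ring
    rcases fin4cases (σ.symm 3) with hk | hk | hk | hk <;> rw [hk] at hkrep hk0
    · obtain ⟨a, ha⟩ := exists_sg (hε 1) (hε 2)
      obtain ⟨b, hb⟩ := exists_sg (hε 1) (hε 3)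
      have hd : c * ε 1 ≠ 0 := mul_ne_zero hc (ne1 (hε 1))
      refine ⟨(0, a, b), ?_⟩
      have key : Projectivization.mk ℂ p.rep p.rep_nonzero
          = Projectivization.mk ℂ (vec (0, a, b)) (vec_ne _) := by
        rw [Projectivization.mk_eq_mk_iff]
        refine ⟨Units.mk0 (c * ε 1) hd, ?_⟩
        funext i; rcases fin4cases i with rfl | rfl | rfl | rfl
        · show (c * ε 1) * 0 = p.rep 0; rw [hk0]; ring
        · show (c * ε 1) * 1 = p.rep 1; rw [hkrep 1 (by decide)]; ring
        · show (c * ε 1) * sg a = p.rep 2; rw [hkrep 2 (by decide), ha]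
          linear_combination c * ε 2 * sq1 (hε 1)
        · show (c * ε 1) * sg b = p.rep 3; rw [hkrep 3 (by decide), hb]
          linear_combination c * ε 3 * sq1 (hε 1)
      exact key.symm.trans (Projectivization.mk_rep p)
    · obtain ⟨a, ha⟩ := exists_sg (hε 0) (hε 2)
      obtain ⟨b, hb⟩ := exists_sg (hε 0) (hε 3)
      have hd : c * ε 0 ≠ 0 := mul_ne_zero hc (ne1 (hε 0))
      refine ⟨(1, a, b), ?_⟩
      have key : Projectivization.mk ℂ p.rep p.rep_nonzero
          = Projectivization.mk ℂ (vec (1, a, b)) (vec_ne _) := by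
        rw [Projectivization.mk_eq_mk_iff]
        refine ⟨Units.mk0 (c * ε 0) hd, ?_⟩
        funext i; rcases fin4cases i with rfl | rfl | rfl | rfl
        · show (c * ε 0) * 1 = p.rep 0; rw [hkrep 0 (by decide)]; ring
        · show (c * ε 0) * 0 = p.rep 1; rw [hk0]; ring
        · show (c * ε 0) * sg a = p.rep 2; rw [hkrep 2 (by decide), ha]
          linear_combination c * ε 2 * sq1 (hε 0)
        · show (c * ε 0) * sg b = p.rep 3; rw [hkrep 3 (by decide), hb]
          linear_combination c * ε 3 * sq1 (hε 0)
      exact key.symm.trans (Projectivization.mk_rep p)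
    · obtain ⟨a, ha⟩ := exists_sg (hε 0) (hε 1)
      obtain ⟨b, hb⟩ := exists_sg (hε 0) (hε 3)
      have hd : c * ε 0 ≠ 0 := mul_ne_zero hc (ne1 (hε 0))
      refine ⟨(2, a, b), ?_⟩
      have key : Projectivization.mk ℂ p.rep p.rep_nonzero
          = Projectivization.mk ℂ (vec (2, a, b)) (vec_ne _) := by
        rw [Projectivization.mk_eq_mk_iff]
        refine ⟨Units.mk0 (c * ε 0) hd, ?_⟩
        funext i; rcases fin4cases i with rfl | rfl | rfl | rfl
        · show (c * ε 0) * 1 = p.rep 0; rw [hkrep 0 (by decide)]; ring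
        · show (c * ε 0) * sg a = p.rep 1; rw [hkrep 1 (by decide), ha]
          linear_combination c * ε 1 * sq1 (hε 0)
        · show (c * ε 0) * 0 = p.rep 2; rw [hk0]; ring
        · show (c * ε 0) * sg b = p.rep 3; rw [hkrep 3 (by decide), hb]
          linear_combination c * ε 3 * sq1 (hε 0)
      exact key.symm.trans (Projectivization.mk_rep p)
    · obtain ⟨a, ha⟩ := exists_sg (hε 0) (hε 1)
      obtain ⟨b, hb⟩ := exists_sg (hε 0) (hε 2)
      have hd : c * ε 0 ≠ 0 := mul_ne_zero hc (ne1 (hε 0))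
      refine ⟨(3, a, b), ?_⟩
      have key : Projectivization.mk ℂ p.rep p.rep_nonzero
          = Projectivization.mk ℂ (vec (3, a, b)) (vec_ne _) := by
        rw [Projectivization.mk_eq_mk_iff]
        refine ⟨Units.mk0 (c * ε 0) hd, ?_⟩
        funext i; rcases fin4cases i with rfl | rfl | rfl | rfl
        · show (c * ε 0) * 1 = p.rep 0; rw [hkrep 0 (by decide)]; ring
        · show (c * ε 0) * sg a = p.rep 1; rw [hkrep 1 (by decide), ha]
          linear_combination c * ε 1 * sq1 (hε 0)
        · show (c * ε 0) * sg b = p.rep 2; rw [hkrep 2 (by decide), hb]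
          linear_combination c * ε 2 * sq1 (hε 0)
        · show (c * ε 0) * 0 = p.rep 3; rw [hk0]; ring
      exact key.symm.trans (Projectivization.mk_rep p)
  · rintro ⟨t, rfl⟩
    exact mem_grad t

theorem stmt10 :
    (∀ x : Fin 4 → ℂ, x ≠ 0 →
      ((∀ i : Fin 4, eval x (pderiv i F) = 0) ↔
        ∃ (c : ℂ) (σ : Equiv.Perm (Fin 4)) (ε : Fin 4 → ℂ),
          (∀ i, ε i = 1 ∨ ε i = -1) ∧
          x = fun i => c * ε i * (![1, 1, 1, 0] : Fin 4 → ℂ) (σ i))) ∧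
    Nat.card {p : Projectivization ℂ (Fin 4 → ℂ) |
      ∀ i : Fin 4, eval p.rep (pderiv i F) = 0} = 16 := by
  constructor
  · intro x hx
    constructor
    · intro h; exact part1fwd x hx ((grad_iff x).mp h)
    · rintro ⟨c, σ, ε, hε, rfl⟩; exact grad_of_form c σ ε hε
  · rw [hset, Nat.card_range_of_injective vec_inj]
    simp [Nat.card_eq_fintype_card]
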